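/- For every monic polynomial f ∈ 𝔽_q[x] of degree ℓ+t with f(0) ≠ 0, there exists a unique monic polynomial g ∈ 𝔽_q[x] of degree ℓ+t with g(0) ≠ 0 such that the product fg is type-I equivalent to the constant polynomial 1, i.e., the reversal of fg is congruent to 1 modulo x^{ℓ+1} and fg ≡ 1 (mod x^t). -/

import Mathlib

open Polynomial

/-- Two monic polynomials with nonzero constant term are type-I equivalent if their
reversals agree modulo `X^(ℓ+1)` and they agree modulo `X^t`. -/
def TypeIEquiv {R : Type*} [CommRing R] (ℓ t : ℕ) (f g : Polynomial R) : Prop :=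
  (X ^ (ℓ + 1) : Polynomial R) ∣ (f.reverse - g.reverse) ∧
  (X ^ t : Polynomial R) ∣ (f - g)

private lemma aux_coprime_X_pow {F : Type*} [Field F] (p : Polynomial F)
    (hp : p.coeff 0 ≠ 0) (n : ℕ) : IsCoprime (X ^ n : Polynomial F) p := by
  refine IsCoprime.pow_left ?_
  obtain ⟨q, hq⟩ : (X : Polynomial F) ∣ (C (p.coeff 0)⁻¹ * p - 1) := by
    rw [X_dvd_iff]
    simp [mul_comm, mul_inv_cancel₀ hp]
  exact ⟨-q, C (p.coeff 0)⁻¹, by linear_combination hq⟩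

private lemma aux_rev_one {F : Type*} [Field F] : (1 : Polynomial F).reverse = 1 := by
  rw [← C_1, reverse_C]

theorem exists_unique_typeI_inverse
    (F : Type*) [Field F] [Fintype F] (ℓ t : ℕ) (hℓ : 1 ≤ ℓ) (ht : 1 ≤ t)
    (f : Polynomial F) (hf : f.Monic) (hfdeg : f.natDegree = ℓ + t)
    (hf0 : f.eval 0 ≠ 0) :
    ∃! g : Polynomial F, g.Monic ∧ g.natDegree = ℓ + t ∧ g.eval 0 ≠ 0 ∧
      TypeIEquiv ℓ t (f * g) 1 := by
  classical
  have hf0' : f.coeff 0 ≠ 0 := by rwa [coeff_zero_eq_eval_zero]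
  have hfr0 : f.reverse.coeff 0 = 1 := by rw [coeff_zero_reverse]; exact hf
  set A : PowerSeries F := ((f : PowerSeries F))⁻¹ with hA
  set B : PowerSeries F := ((f.reverse : PowerSeries F))⁻¹ with hB
  have hcf : PowerSeries.constantCoeff (f : PowerSeries F) ≠ 0 := by
    rwa [← PowerSeries.coeff_zero_eq_constantCoeff_apply, Polynomial.coeff_coe]
  have hcfr : PowerSeries.constantCoeff (f.reverse : PowerSeries F) ≠ 0 := by
    rw [← PowerSeries.coeff_zero_eq_constantCoeff_apply, Polynomial.coeff_coe, hfr0]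
    exact one_ne_zero
  have hfa : (f : PowerSeries F) * A = 1 := PowerSeries.mul_inv_cancel _ hcf
  have hfb : (f.reverse : PowerSeries F) * B = 1 := PowerSeries.mul_inv_cancel _ hcfr
  set c : Polynomial F := PowerSeries.trunc (ℓ + 1) B with hc
  set g : Polynomial F := PowerSeries.trunc t A + (reflect ℓ c) * X ^ t with hgdef
  -- coefficients of g
  have hgl : ∀ j < t, g.coeff j = PowerSeries.coeff j A := by
    intro j hj
    rw [hgdef, coeff_add, PowerSeries.coeff_trunc, if_pos hj, coeff_mul_X_pow',
      if_neg (by omega), add_zero]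
  have hgh : ∀ j ≤ ℓ, g.coeff (j + t) = PowerSeries.coeff (ℓ - j) B := by
    intro j hj
    rw [hgdef, coeff_add, PowerSeries.coeff_trunc, if_neg (by omega), coeff_mul_X_pow',
      if_pos (by omega), Nat.add_sub_cancel, coeff_reflect, revAt_le hj, hc,
      PowerSeries.coeff_trunc, if_pos (by omega), zero_add]
  have hghi : ∀ j, ℓ + t < j → g.coeff j = 0 := by
    intro j hj
    rw [hgdef, coeff_add, PowerSeries.coeff_trunc, if_neg (by omega), coeff_mul_X_pow']
    rw [if_pos (by omega), coeff_reflect, revAt_eq_self_of_lt (by omega), hc,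
      PowerSeries.coeff_trunc, if_neg (by omega), zero_add]
  have hB0 : PowerSeries.coeff 0 B = 1 := by
    rw [PowerSeries.coeff_zero_eq_constantCoeff_apply, hB, PowerSeries.constantCoeff_inv,
      ← PowerSeries.coeff_zero_eq_constantCoeff_apply, Polynomial.coeff_coe, hfr0, inv_one]
  have hgtop : g.coeff (ℓ + t) = 1 := by
    rw [hgh ℓ le_rfl, Nat.sub_self, hB0]
  have hgmon : g.Monic := by
    refine monic_of_natDegree_le_of_coeff_eq_one (ℓ + t) ?_ hgtop
    rw [natDegree_le_iff_coeff_eq_zero]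
    exact hghi
  have hgdeg : g.natDegree = ℓ + t :=
    le_antisymm (natDegree_le_iff_coeff_eq_zero.mpr hghi)
      (le_natDegree_of_ne_zero (by rw [hgtop]; exact one_ne_zero))
  have hg0 : g.eval 0 ≠ 0 := by
    rw [← coeff_zero_eq_eval_zero, hgl 0 ht, PowerSeries.coeff_zero_eq_constantCoeff_apply,
      hA, PowerSeries.constantCoeff_inv, ← PowerSeries.coeff_zero_eq_constantCoeff_apply,
      Polynomial.coeff_coe]
    exact inv_ne_zero hf0'
  -- reverse coefficients of g
  have hrg : ∀ i ≤ ℓ, g.reverse.coeff i = PowerSeries.coeff i B := by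
    intro i hi
    rw [coeff_reverse, hgdeg, revAt_le (by omega)]
    have h1 : ℓ + t - i = (ℓ - i) + t := by omega
    rw [h1, hgh (ℓ - i) (Nat.sub_le _ _), Nat.sub_sub_self hi]
  -- second divisibility
  have hdvd2 : (X ^ t : Polynomial F) ∣ (f * g - 1) := by
    have h1 : (PowerSeries.X : PowerSeries F) ^ t ∣ ((g : PowerSeries F) - A) := by
      rw [PowerSeries.X_pow_dvd_iff]
      intro m hm
      rw [map_sub, Polynomial.coeff_coe, hgl m hm, sub_self]
    have h2 : (PowerSeries.X : PowerSeries F) ^ t ∣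
        ((f : PowerSeries F) * (g : PowerSeries F) - 1) := by
      have : (f : PowerSeries F) * (g : PowerSeries F) - 1
          = (f : PowerSeries F) * ((g : PowerSeries F) - A) := by
        rw [mul_sub, hfa]
      rw [this]
      exact h1.mul_left _
    rw [Polynomial.X_pow_dvd_iff]
    intro d hd
    have := PowerSeries.X_pow_dvd_iff.mp h2 d hd
    rwa [← Polynomial.coe_mul, ← Polynomial.coe_one, ← Polynomial.coe_sub,
      Polynomial.coeff_coe] at this
  -- first divisibility
  have hdvd1 : (X ^ (ℓ + 1) : Polynomial F) ∣ ((f * g).reverse - (1 : Polynomial F).reverse) := by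
    rw [aux_rev_one, reverse_mul_of_domain]
    have h1 : (PowerSeries.X : PowerSeries F) ^ (ℓ + 1) ∣ ((g.reverse : PowerSeries F) - B) := by
      rw [PowerSeries.X_pow_dvd_iff]
      intro m hm
      rw [map_sub, Polynomial.coeff_coe, hrg m (by omega), sub_self]
    have h2 : (PowerSeries.X : PowerSeries F) ^ (ℓ + 1) ∣
        ((f.reverse : PowerSeries F) * (g.reverse : PowerSeries F) - 1) := by
      have : (f.reverse : PowerSeries F) * (g.reverse : PowerSeries F) - 1
          = (f.reverse : PowerSeries F) * ((g.reverse : PowerSeries F) - B) := by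
        rw [mul_sub, hfb]
      rw [this]
      exact h1.mul_left _
    rw [Polynomial.X_pow_dvd_iff]
    intro d hd
    have := PowerSeries.X_pow_dvd_iff.mp h2 d hd
    rwa [← Polynomial.coe_mul, ← Polynomial.coe_one, ← Polynomial.coe_sub,
      Polynomial.coeff_coe] at this
  refine ⟨g, ⟨hgmon, hgdeg, hg0, hdvd1, hdvd2⟩, ?_⟩
  -- uniqueness
  rintro y ⟨hymon, hydeg, hy0, hyrev, hylow⟩
  have hcop : IsCoprime (X ^ t : Polynomial F) f := aux_coprime_X_pow f hf0' t
  have hcopr : IsCoprime (X ^ (ℓ + 1) : Polynomial F) f.reverse :=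
    aux_coprime_X_pow f.reverse (by rw [hfr0]; exact one_ne_zero) (ℓ + 1)
  -- low coefficients agree
  have hlow : (X ^ t : Polynomial F) ∣ (y - g) := by
    refine hcop.dvd_of_dvd_mul_left ?_
    have : f * (y - g) = (f * y - 1) - (f * g - 1) := by ring
    rw [this]
    exact dvd_sub hylow hdvd2
  -- high coefficients agree
  have hhigh : (X ^ (ℓ + 1) : Polynomial F) ∣ (y.reverse - g.reverse) := by
    refine hcopr.dvd_of_dvd_mul_left ?_
    have h1 : (X ^ (ℓ + 1) : Polynomial F) ∣ (f.reverse * y.reverse - 1) := by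
      have := hyrev
      rwa [aux_rev_one, reverse_mul_of_domain] at this
    have h2 : (X ^ (ℓ + 1) : Polynomial F) ∣ (f.reverse * g.reverse - 1) := by
      have := hdvd1
      rwa [aux_rev_one, reverse_mul_of_domain] at this
    have : f.reverse * (y.reverse - g.reverse)
        = (f.reverse * y.reverse - 1) - (f.reverse * g.reverse - 1) := by ring
    rw [this]
    exact dvd_sub h1 h2
  ext n
  rcases lt_or_ge n t with hn | hn
  · have := Polynomial.X_pow_dvd_iff.mp hlow n hn
    rw [coeff_sub, sub_eq_zero] at this
    exact this
  rcases le_or_gt n (ℓ + t) with hn' | hn'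
  · have hi : ℓ + t - n < ℓ + 1 := by omega
    have := Polynomial.X_pow_dvd_iff.mp hhigh (ℓ + t - n) hi
    rw [coeff_sub, sub_eq_zero, coeff_reverse, coeff_reverse, hgdeg, hydeg,
      revAt_le (by omega), Nat.sub_sub_self hn'] at this
    exact this
  · rw [coeff_eq_zero_of_natDegree_lt (by omega : y.natDegree < n),
      coeff_eq_zero_of_natDegree_lt (by omega : g.natDegree < n)]
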